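/- Consider point masses on the torus: f = Σᵢ fᵢ δ_{φᵢ}, g = Σⱼ gⱼ δ_{ψⱼ}, with all φᵢ, ψⱼ ∈ 𝕋¹₊ ∪ 𝕋¹₋, equal masses in each group. If a transference plan π has π_{ij} > 0 for some φᵢ ∈ 𝕋¹₊, ψⱼ ∈ 𝕋¹₋, then there exist i*, j* with φ_{i*} ∈ 𝕋¹₋, ψ_{j*} ∈ 𝕋¹₊ and π_{i*j*} > 0, and the modified plan obtained by moving mass m = min{π_{ij}, π_{i*j*}} via π_{ij} → π_{ij} - m, π_{i*j*} → π_{i*j*} - m, π_{ij*} → π_{ij*} + m, π_{i*j} → π_{i*j} + m has total cost not larger than that of π. -/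
import Mathlib


open MeasureTheory Set Finset

/-- Geodesic (torus) distance between two angles given by real representatives. -/
noncomputable def torDist (x y : ℝ) : ℝ :=
  dist (x : AddCircle (2*Real.pi)) (y : AddCircle (2*Real.pi))

lemma torDist_eq_norm (x y : ℝ) :
    torDist x y = ‖((x - y : ℝ) : AddCircle (2*Real.pi))‖ := by
  unfold torDist
  rw [dist_eq_norm]
  norm_cast

lemma torDist_eq_abs {x y : ℝ} (h : |x - y| ≤ Real.pi) : torDist x y = |x - y| := by
  rw [torDist_eq_norm]
  rw [AddCircle.norm_coe_eq_abs_iff]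
  · have : |2 * Real.pi| = 2 * Real.pi := abs_of_pos (by positivity)
    rw [this]; linarith
  · positivity

lemma torDist_lower {x y : ℝ} (h1 : Real.pi/2 ≤ x - y) (h2 : x - y ≤ 3*Real.pi/2) :
    Real.pi/2 ≤ torDist x y := by
  rw [torDist_eq_norm, AddCircle.norm_eq]
  set k : ℤ := round ((2*Real.pi)⁻¹ * (x - y)) with hk
  have hπ : 0 < Real.pi := Real.pi_pos
  rcases le_or_gt k 0 with hk0 | hk1
  · have : (k : ℝ) * (2*Real.pi) ≤ 0 := by
      apply mul_nonpos_of_nonpos_of_nonneg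
      · exact_mod_cast hk0
      · positivity
    rw [abs_of_nonneg (by linarith)]
    linarith
  · have hk1' : (1 : ℝ) ≤ (k : ℝ) := by exact_mod_cast hk1
    have : 2*Real.pi ≤ (k : ℝ) * (2*Real.pi) := by nlinarith
    rw [abs_of_nonpos (by linarith)]
    linarith

lemma torDist_comm (x y : ℝ) : torDist x y = torDist y x := dist_comm _ _

lemma torDist_nonneg (x y : ℝ) : 0 ≤ torDist x y := dist_nonneg

theorem stmt_9 {M N : ℕ} (φ : Fin M → ℝ) (ψ : Fin N → ℝ)
    (fm : Fin M → ℝ) (gm : Fin N → ℝ) (p : Fin M → Fin N → ℝ)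
    (hφ : ∀ i, φ i ∈ Ioo (Real.pi/4) (3*Real.pi/4) ∪ Ioo (-(3*Real.pi/4)) (-(Real.pi/4)))
    (hψ : ∀ j, ψ j ∈ Ioo (Real.pi/4) (3*Real.pi/4) ∪ Ioo (-(3*Real.pi/4)) (-(Real.pi/4)))
    (hp_nonneg : ∀ i j, 0 ≤ p i j)
    (hrow : ∀ i, ∑ j, p i j = fm i) (hcol : ∀ j, ∑ i, p i j = gm j)
    (hmass : ∑ i ∈ Finset.univ.filter (fun i => φ i ∈ Ioo (Real.pi/4) (3*Real.pi/4)), fm i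
           = ∑ j ∈ Finset.univ.filter (fun j => ψ j ∈ Ioo (Real.pi/4) (3*Real.pi/4)), gm j)
    (i : Fin M) (j : Fin N)
    (hi : φ i ∈ Ioo (Real.pi/4) (3*Real.pi/4)) (hj : ψ j ∈ Ioo (-(3*Real.pi/4)) (-(Real.pi/4)))
    (hij : 0 < p i j) :
    ∃ istar : Fin M, ∃ jstar : Fin N,
      φ istar ∈ Ioo (-(3*Real.pi/4)) (-(Real.pi/4)) ∧
      ψ jstar ∈ Ioo (Real.pi/4) (3*Real.pi/4) ∧
      0 < p istar jstar ∧
      (∑ a, ∑ b,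
          (p a b
            + (if (a = i ∧ b = jstar) ∨ (a = istar ∧ b = j)
                then min (p i j) (p istar jstar) else 0)
            - (if (a = i ∧ b = j) ∨ (a = istar ∧ b = jstar)
                then min (p i j) (p istar jstar) else 0))
          * torDist (φ a) (ψ b) ^ 2)
        ≤ ∑ a, ∑ b, p a b * torDist (φ a) (ψ b) ^ 2 := by
  have hπ : 0 < Real.pi := Real.pi_pos
  -- the two groups are disjoint
  have hdisj : ∀ x : ℝ, x ∈ Ioo (Real.pi/4) (3*Real.pi/4) →
      x ∉ Ioo (-(3*Real.pi/4)) (-(Real.pi/4)) := by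
    intro x hx hx'
    have := hx.1; have := hx'.2
    simp only [Set.mem_Ioo] at *
    linarith [hx.1, hx'.2]
  set P : Finset (Fin M) := Finset.univ.filter (fun a => φ a ∈ Ioo (Real.pi/4) (3*Real.pi/4))
    with hP
  set Q : Finset (Fin N) := Finset.univ.filter (fun b => ψ b ∈ Ioo (Real.pi/4) (3*Real.pi/4))
    with hQ
  have hiP : i ∈ P := by
    simp only [hP, Finset.mem_filter, Finset.mem_univ, true_and]; exact hi
  have hjQ : j ∉ Q := by
    simp only [hQ, Finset.mem_filter, Finset.mem_univ, true_and]
    exact fun h => hdisj _ h hj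
  -- mass balance gives cross mass equality
  have hbal : ∑ a ∈ P, ∑ b ∈ Qᶜ, p a b = ∑ a ∈ Pᶜ, ∑ b ∈ Q, p a b := by
    have h1 : ∑ a ∈ P, fm a = ∑ a ∈ P, (∑ b ∈ Q, p a b + ∑ b ∈ Qᶜ, p a b) := by
      apply Finset.sum_congr rfl
      intro a _
      rw [← hrow a, ← Finset.sum_add_sum_compl Q]
    have h2 : ∑ b ∈ Q, gm b = ∑ b ∈ Q, (∑ a ∈ P, p a b + ∑ a ∈ Pᶜ, p a b) := by
      apply Finset.sum_congr rfl
      intro b _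
      rw [← hcol b, ← Finset.sum_add_sum_compl P]
    rw [h1, h2] at hmass
    rw [Finset.sum_add_distrib, Finset.sum_add_distrib] at hmass
    have hc : ∑ b ∈ Q, ∑ a ∈ Pᶜ, p a b = ∑ a ∈ Pᶜ, ∑ b ∈ Q, p a b := Finset.sum_comm
    have hc2 : ∑ a ∈ P, ∑ b ∈ Q, p a b = ∑ b ∈ Q, ∑ a ∈ P, p a b := Finset.sum_comm
    linarith
  have hpos : 0 < ∑ a ∈ Pᶜ, ∑ b ∈ Q, p a b := by
    rw [← hbal]
    have h1 : p i j ≤ ∑ b ∈ Qᶜ, p i b :=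
      Finset.single_le_sum (fun b _ => hp_nonneg i b) (by simpa using hjQ)
    have h2 : ∑ b ∈ Qᶜ, p i b ≤ ∑ a ∈ P, ∑ b ∈ Qᶜ, p a b :=
      Finset.single_le_sum (fun a _ => Finset.sum_nonneg fun b _ => hp_nonneg a b) hiP
    linarith
  -- extract istar, jstar
  obtain ⟨istar, histar, hrowpos⟩ : ∃ a ∈ Pᶜ, 0 < ∑ b ∈ Q, p a b := by
    by_contra h
    push_neg at h
    have : ∑ a ∈ Pᶜ, ∑ b ∈ Q, p a b ≤ 0 := Finset.sum_nonpos h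
    linarith
  obtain ⟨jstar, hjstar, hpij⟩ : ∃ b ∈ Q, 0 < p istar b := by
    by_contra h
    push_neg at h
    have : ∑ b ∈ Q, p istar b ≤ 0 := Finset.sum_nonpos h
    linarith
  have histar' : φ istar ∈ Ioo (-(3*Real.pi/4)) (-(Real.pi/4)) := by
    rcases hφ istar with h | h
    · exfalso; apply (by simpa [hP] using histar : φ istar ∉ _) h
    · exact h
  have hjstar' : ψ jstar ∈ Ioo (Real.pi/4) (3*Real.pi/4) := by simpa [hQ] using hjstar
  refine ⟨istar, jstar, histar', hjstar', hpij, ?_⟩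
  -- abbreviations
  set m := min (p i j) (p istar jstar) with hm
  have hm0 : 0 ≤ m := le_min (le_of_lt hij) (le_of_lt hpij)
  set C : Fin M → Fin N → ℝ := fun a b => torDist (φ a) (ψ b) ^ 2 with hC
  have hii : i ≠ istar := by
    intro h
    exact hdisj _ hi (h ▸ histar')
  have hjj : j ≠ jstar := by
    intro h
    exact hdisj _ hjstar' (h ▸ hj) |>.elim
  -- key distance inequality
  have hcross1 : Real.pi/2 ≤ torDist (φ i) (ψ j) := by
    apply torDist_lower
    · simp only [Set.mem_Ioo] at hi hj; linarith [hi.1, hj.2]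
    · simp only [Set.mem_Ioo] at hi hj; linarith [hi.2, hj.1]
  have hcross2 : Real.pi/2 ≤ torDist (φ istar) (ψ jstar) := by
    rw [torDist_comm]
    apply torDist_lower
    · simp only [Set.mem_Ioo] at histar' hjstar'; linarith [hjstar'.1, histar'.2]
    · simp only [Set.mem_Ioo] at histar' hjstar'; linarith [hjstar'.2, histar'.1]
  have hsame1 : torDist (φ i) (ψ jstar) ≤ Real.pi/2 := by
    have habs : |φ i - ψ jstar| ≤ Real.pi/2 := by
      rw [abs_le]
      simp only [Set.mem_Ioo] at hi hjstar'
      constructor <;> [linarith [hi.1, hjstar'.2]; linarith [hi.2, hjstar'.1]]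
    rw [torDist_eq_abs (le_trans habs (by linarith))]
    exact habs
  have hsame2 : torDist (φ istar) (ψ j) ≤ Real.pi/2 := by
    have habs : |φ istar - ψ j| ≤ Real.pi/2 := by
      rw [abs_le]
      simp only [Set.mem_Ioo] at histar' hj
      constructor <;> [linarith [histar'.1, hj.2]; linarith [histar'.2, hj.1]]
    rw [torDist_eq_abs (le_trans habs (by linarith))]
    exact habs
  have hCineq : C i jstar + C istar j ≤ C i j + C istar jstar := by
    have h1 : C i jstar ≤ (Real.pi/2)^2 := by
      simp only [hC]
      exact pow_le_pow_left₀ (torDist_nonneg _ _) hsame1 2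
    have h2 : C istar j ≤ (Real.pi/2)^2 := by
      simp only [hC]
      exact pow_le_pow_left₀ (torDist_nonneg _ _) hsame2 2
    have h3 : (Real.pi/2)^2 ≤ C i j := by
      simp only [hC]
      exact pow_le_pow_left₀ (by positivity) hcross1 2
    have h4 : (Real.pi/2)^2 ≤ C istar jstar := by
      simp only [hC]
      exact pow_le_pow_left₀ (by positivity) hcross2 2
    linarith
  -- split sums
  have hsplit : ∀ a b, (p a b
        + (if (a = i ∧ b = jstar) ∨ (a = istar ∧ b = j) then m else 0)
        - (if (a = i ∧ b = j) ∨ (a = istar ∧ b = jstar) then m else 0)) * C a b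
      = p a b * C a b
        + ((if a = i ∧ b = jstar then m * C a b else 0)
            + (if a = istar ∧ b = j then m * C a b else 0))
        - ((if a = i ∧ b = j then m * C a b else 0)
            + (if a = istar ∧ b = jstar then m * C a b else 0)) := by
    intro a b
    have hii' : istar ≠ i := Ne.symm hii
    have hjj' : jstar ≠ j := Ne.symm hjj
    by_cases h1 : a = i ∧ b = jstar <;> by_cases h2 : a = istar ∧ b = j <;>
      by_cases h3 : a = i ∧ b = j <;> by_cases h4 : a = istar ∧ b = jstar <;>
      first
        | (exfalso; first
            | exact hii (h1.1 ▸ h2.1 ▸ rfl)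
            | exact hjj (h3.2 ▸ h1.2 ▸ rfl)
            | exact hii (h3.1 ▸ h4.1 ▸ rfl)
            | exact hjj (h2.2 ▸ h4.2 ▸ rfl)
            | exact hii (h1.1 ▸ h4.1 ▸ rfl)
            | exact hjj (h2.2 ▸ h1.2 ▸ rfl)
            | exact hii (h3.1 ▸ h2.1 ▸ rfl)
            | exact hjj (h3.2 ▸ h4.2 ▸ rfl))
        | (simp only [h1, h2, h3, h4, hii, hjj, hii', hjj', if_true, if_false,
            and_true, true_and, and_false, false_and, or_false, false_or, or_true,
            true_or, or_self, and_self, ite_true, ite_false]; ring)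
  have hsum_pt : ∀ (a0 : Fin M) (b0 : Fin N) (f : Fin M → Fin N → ℝ),
      ∑ a, ∑ b, (if a = a0 ∧ b = b0 then f a b else 0) = f a0 b0 := by
    intro a0 b0 f
    rw [Finset.sum_eq_single a0]
    · rw [Finset.sum_eq_single b0]
      · simp
      · intro b _ hb; simp [hb]
      · simp
    · intro a _ ha
      simp [ha]
    · simp
  calc ∑ a, ∑ b, (p a b
        + (if (a = i ∧ b = jstar) ∨ (a = istar ∧ b = j) then m else 0)
        - (if (a = i ∧ b = j) ∨ (a = istar ∧ b = jstar) then m else 0)) * C a b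
      = (∑ a, ∑ b, p a b * C a b)
        + (m * C i jstar + m * C istar j) - (m * C i j + m * C istar jstar) := by
        simp only [hsplit, Finset.sum_add_distrib, Finset.sum_sub_distrib]
        rw [hsum_pt i jstar (fun a b => m * C a b), hsum_pt istar j (fun a b => m * C a b),
          hsum_pt i j (fun a b => m * C a b), hsum_pt istar jstar (fun a b => m * C a b)]
    _ ≤ ∑ a, ∑ b, p a b * C a b := by
        have := mul_le_mul_of_nonneg_left hCineq hm0
        nlinarith [this]
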